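/- Let n be a positive integer divisible by 4 and let L = n·I − J − (e₁ − e₂)(e₁ − e₂)ᵀ be the Laplacian of the complete graph on n vertices with the edge between vertices 1 and 2 deleted. Then for every real h, the fidelity at time π/2 + h satisfies p(π/2 + h) = |(exp(i(π/2 + h)L))₁₂|² = |1/n + (1/2)e^{ih(n−2)} + ((n−2)/(2n))e^{ihn}|² = 1 − ((n−2)/(2n))·(1 − cos(2h)) − (1/n)·(1 − cos((n−2)h)) − ((n−2)/n²)·(1 − cos(nh)). -/

import Mathlib

open Matrix

/-- The vector `e₁ - e₂`. -/
def eVec (n : ℕ) : Fin n → ℝ :=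
  fun i => (if (i : ℕ) = 0 then 1 else 0) - (if (i : ℕ) = 1 then 1 else 0)

/-- The Laplacian `L = n I - J - (e₁ - e₂)(e₁ - e₂)ᵀ` of the complete graph on `n`
vertices with the edge between vertices 1 and 2 deleted. -/
def lap (n : ℕ) : Matrix (Fin n) (Fin n) ℝ :=
  (n : ℝ) • (1 : Matrix (Fin n) (Fin n) ℝ) - Matrix.of (fun _ _ => (1 : ℝ))
    - Matrix.vecMulVec (eVec n) (eVec n)

open NormedSpace in
lemma exp_smul_idem' {𝔸 : Type*} [NormedRing 𝔸] [NormedAlgebra ℂ 𝔸] [CompleteSpace 𝔸]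
    (P : 𝔸) (hP : P * P = P) (α : ℂ) :
    exp (α • P) = 1 + (Complex.exp α - 1) • P := by
  have hPpow : ∀ k : ℕ, P ^ (k + 1) = P := by
    intro k; induction k with
    | zero => simp
    | succ k ih => rw [pow_succ, ih, hP]
  have hpow : ∀ k : ℕ, (α • P) ^ (k + 1) = α ^ (k + 1) • P := by
    intro k; rw [smul_pow, hPpow]
  have hsum : Summable fun k : ℕ => ((Nat.factorial (k + 1)) : ℂ)⁻¹ * α ^ (k + 1) := by
    have := NormedSpace.expSeries_summable' (𝕂 := ℂ) α
    simp only [smul_eq_mul] at this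
    exact this.comp_injective (add_left_injective 1)
  have hscalar : (∑' k : ℕ, ((Nat.factorial (k + 1)) : ℂ)⁻¹ * α ^ (k + 1))
      = Complex.exp α - 1 := by
    have h2 : Complex.exp α = ∑' k : ℕ, ((Nat.factorial k) : ℂ)⁻¹ • α ^ k := by
      rw [Complex.exp_eq_exp_ℂ, NormedSpace.exp_eq_tsum ℂ]
    rw [Summable.tsum_eq_zero_add (NormedSpace.expSeries_summable' (𝕂 := ℂ) α)] at h2
    simp only [pow_zero, Nat.factorial_zero, Nat.cast_one, inv_one, one_smul,
      smul_eq_mul] at h2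
    rw [h2]; ring
  rw [NormedSpace.exp_eq_tsum ℂ]
  beta_reduce
  rw [Summable.tsum_eq_zero_add (NormedSpace.expSeries_summable' (𝕂 := ℂ) (α • P))]
  simp only [pow_zero, Nat.factorial_zero, Nat.cast_one, inv_one, one_smul, hpow,
    smul_smul]
  congr 1
  rw [← hscalar, ← Summable.tsum_smul_const]
  exact hsum

open NormedSpace in
lemma matrix_exp_smul_idem {n : ℕ} (P : Matrix (Fin n) (Fin n) ℂ) (hP : P * P = P) (α : ℂ) :
    exp (α • P) = 1 + (Complex.exp α - 1) • P := by
  letI : SeminormedRing (Matrix (Fin n) (Fin n) ℂ) := Matrix.linftyOpSemiNormedRing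
  letI : NormedRing (Matrix (Fin n) (Fin n) ℂ) := Matrix.linftyOpNormedRing
  letI : NormedAlgebra ℂ (Matrix (Fin n) (Fin n) ℂ) := Matrix.linftyOpNormedAlgebra
  exact exp_smul_idem' P hP α

/-- Exact fidelity at time `π/2 + h` for the Laplacian of the complete graph minus an
edge, when `4 ∣ n`:
`p(π/2 + h) = |1/n + ½ e^{ih(n-2)} + ((n-2)/(2n)) e^{ihn}|²`
`           = 1 - ((n-2)/(2n))(1 - cos 2h) - (1/n)(1 - cos((n-2)h)) - ((n-2)/n²)(1 - cos nh)`. -/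
theorem stmt14 {n : ℕ} (hn : 0 < n) (hdvd : 4 ∣ n) (h : ℝ) :
    ‖(NormedSpace.exp (Complex.I • ((Real.pi / 2 + h : ℝ) : ℂ) •
            (lap n).map (fun x => (x : ℂ)))) ⟨0, by omega⟩ ⟨1, by omega⟩‖ ^ 2
      = ‖(n : ℂ)⁻¹ + (2 : ℂ)⁻¹ * Complex.exp (Complex.I * (h : ℂ) * ((n : ℂ) - 2))
            + (((n : ℂ) - 2) / (2 * (n : ℂ))) * Complex.exp (Complex.I * (h : ℂ) * (n : ℂ))‖ ^ 2
    ∧ ‖(n : ℂ)⁻¹ + (2 : ℂ)⁻¹ * Complex.exp (Complex.I * (h : ℂ) * ((n : ℂ) - 2))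
            + (((n : ℂ) - 2) / (2 * (n : ℂ))) * Complex.exp (Complex.I * (h : ℂ) * (n : ℂ))‖ ^ 2
      = 1 - ((n : ℝ) - 2) / (2 * n) * (1 - Real.cos (2 * h))
          - (1 / (n : ℝ)) * (1 - Real.cos (((n : ℝ) - 2) * h))
          - ((n : ℝ) - 2) / (n : ℝ) ^ 2 * (1 - Real.cos ((n : ℝ) * h)) := by
  have hn4' : (4 : ℕ) ≤ n := Nat.le_of_dvd hn hdvd
  obtain ⟨m, hm4⟩ := hdvd
  have hm : 0 < m := by omega
  have hnR : (n : ℝ) ≠ 0 := by positivity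
  have hnC : (n : ℂ) ≠ 0 := Nat.cast_ne_zero.mpr (by omega)
  -- indices
  have h01 : ((⟨0, by omega⟩ : Fin n)) ≠ (⟨1, by omega⟩ : Fin n) := by
    simp [Fin.ext_iff]
  -- complex pieces
  set ev : Fin n → ℂ := fun i => (if (i : ℕ) = 0 then 1 else 0) - (if (i : ℕ) = 1 then 1 else 0)
    with hev
  set J : Matrix (Fin n) (Fin n) ℂ := Matrix.of (fun _ _ => (1 : ℂ)) with hJ
  set V : Matrix (Fin n) (Fin n) ℂ := Matrix.vecMulVec ev ev with hV
  have hmap : (lap n).map (fun x => (x : ℂ)) =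
      (n : ℂ) • (1 : Matrix (Fin n) (Fin n) ℂ) - J - V := by
    ext i j
    simp only [lap, eVec, Matrix.map_apply, Matrix.sub_apply, Matrix.smul_apply,
      Matrix.one_apply, Matrix.of_apply, Matrix.vecMulVec_apply, hJ, hV, hev,
      smul_eq_mul]
    push_cast [apply_ite (fun x : ℝ => (x : ℂ))]
    ring
  -- rewrite the if-conditions as Fin equalities
  have hcond0 : ∀ k : Fin n, ((k : ℕ) = 0) = (k = (⟨0, by omega⟩ : Fin n)) := by
    intro k; simp [Fin.ext_iff]
  have hcond1 : ∀ k : Fin n, ((k : ℕ) = 1) = (k = (⟨1, by omega⟩ : Fin n)) := by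
    intro k; simp [Fin.ext_iff]
  have hsum0 : (∑ k : Fin n, ev k) = 0 := by
    simp only [hev, hcond0, hcond1, Finset.sum_sub_distrib, Finset.sum_ite_eq',
      Finset.mem_univ, if_true, sub_self]
  have hsum2 : (∑ k : Fin n, ev k * ev k) = 2 := by
    have key : ∀ k : Fin n, ev k * ev k =
        (if (k : ℕ) = 0 then (1:ℂ) else 0) + (if (k : ℕ) = 1 then (1:ℂ) else 0) := by
      intro k
      rcases eq_or_ne (k : ℕ) 0 with hk0 | hk0
      · have hk1 : (k : ℕ) ≠ 1 := by omega
        simp [hev, hk0, hk1]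
      · rcases eq_or_ne (k : ℕ) 1 with hk1 | hk1
        · simp [hev, hk0, hk1]
        · simp [hev, hk0, hk1]
    simp only [key, Finset.sum_add_distrib, hcond0, hcond1, Finset.sum_ite_eq',
      Finset.mem_univ, if_true]
    norm_num
  -- algebraic relations
  have hJJ : J * J = (n : ℂ) • J := by
    ext i j
    simp [hJ, Matrix.mul_apply, Finset.sum_const]
  have hJV : J * V = 0 := by
    ext i j
    simp only [hJ, hV, Matrix.mul_apply, Matrix.of_apply, Matrix.vecMulVec_apply,
      one_mul, Matrix.zero_apply]
    rw [← Finset.sum_mul, hsum0, zero_mul]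
  have hVJ : V * J = 0 := by
    ext i j
    simp only [hJ, hV, Matrix.mul_apply, Matrix.of_apply, Matrix.vecMulVec_apply,
      mul_one, Matrix.zero_apply]
    rw [← Finset.mul_sum, hsum0, mul_zero]
  have hVV : V * V = (2 : ℂ) • V := by
    ext i j
    simp only [hV, Matrix.mul_apply, Matrix.vecMulVec_apply, Matrix.smul_apply,
      smul_eq_mul]
    calc (∑ k, ev i * ev k * (ev k * ev j)) = (∑ k, ev k * ev k) * (ev i * ev j) := by
          rw [Finset.sum_mul]; congr 1; ext k; ring
      _ = 2 * (ev i * ev j) := by rw [hsum2]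
  -- the time and the scalar
  set t : ℝ := Real.pi / 2 + h with ht
  set c : ℂ := Complex.I * (t : ℂ) with hc
  have hsmul : Complex.I • ((t : ℝ) : ℂ) • (lap n).map (fun x => (x : ℂ))
      = (c * (n : ℂ)) • (1 : Matrix (Fin n) (Fin n) ℂ) + ((-c) • J + (-c) • V) := by
    rw [hmap, smul_smul, ← hc]
    ext i j
    simp only [Matrix.add_apply, Matrix.sub_apply, Matrix.smul_apply, smul_eq_mul]
    ring
  -- exponentials of the three pieces
  have hexp1 : NormedSpace.exp ((c * (n : ℂ)) • (1 : Matrix (Fin n) (Fin n) ℂ))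
      = Complex.exp (c * n) • (1 : Matrix (Fin n) (Fin n) ℂ) := by
    rw [matrix_exp_smul_idem _ (one_mul _) _]
    ext i j
    by_cases hij : i = j
    · simp [Matrix.one_apply, hij]
    · simp [Matrix.one_apply, hij]
  have hPJ : ((n : ℂ)⁻¹ • J) * ((n : ℂ)⁻¹ • J) = (n : ℂ)⁻¹ • J := by
    rw [Matrix.smul_mul, Matrix.mul_smul, hJJ, smul_smul, smul_smul]
    congr 1
    field_simp
  have hexpJ : NormedSpace.exp ((-c) • J)
      = 1 + ((Complex.exp (-(c * n)) - 1) * (n : ℂ)⁻¹) • J := by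
    have hsc : (-(c * (n : ℂ))) * (n : ℂ)⁻¹ = -c := by field_simp
    have : (-c) • J = (-(c * (n : ℂ))) • ((n : ℂ)⁻¹ • J) := by
      rw [smul_smul, hsc]
    rw [this, matrix_exp_smul_idem _ hPJ _, smul_smul]
  have hPV : ((2 : ℂ)⁻¹ • V) * ((2 : ℂ)⁻¹ • V) = (2 : ℂ)⁻¹ • V := by
    rw [Matrix.smul_mul, Matrix.mul_smul, hVV, smul_smul, smul_smul]
    congr 1
    norm_num
  have hexpV : NormedSpace.exp ((-c) • V)
      = 1 + ((Complex.exp (-(2 * c)) - 1) * (2 : ℂ)⁻¹) • V := by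
    have hsc : (-(2 * c)) * (2 : ℂ)⁻¹ = -c := by field_simp
    have : (-c) • V = (-(2 * c)) • ((2 : ℂ)⁻¹ • V) := by
      rw [smul_smul, hsc]
    rw [this, matrix_exp_smul_idem _ hPV _, smul_smul]
  -- commutation
  have hcJV : Commute J V := by
    unfold Commute SemiconjBy
    rw [hJV, hVJ]
  have hcomm1 : Commute ((c * (n : ℂ)) • (1 : Matrix (Fin n) (Fin n) ℂ)) ((-c) • J + (-c) • V) :=
    ((Commute.one_left _).smul_left _)
  have hcomm2 : Commute ((-c) • J) ((-c) • V) := (hcJV.smul_left _).smul_right _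
  -- assemble
  set a : ℂ := (Complex.exp (-(c * n)) - 1) * (n : ℂ)⁻¹ with ha
  set b : ℂ := (Complex.exp (-(2 * c)) - 1) * (2 : ℂ)⁻¹ with hb
  have hprod : NormedSpace.exp (Complex.I • ((t : ℝ) : ℂ) • (lap n).map (fun x => (x : ℂ)))
      = Complex.exp (c * n) • ((1 : Matrix (Fin n) (Fin n) ℂ) + a • J + b • V) := by
    rw [hsmul, Matrix.exp_add_of_commute _ _ hcomm1, Matrix.exp_add_of_commute _ _ hcomm2,
      hexp1, hexpJ, hexpV]
    rw [Matrix.smul_mul]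
    congr 1
    rw [Matrix.one_mul]
    rw [add_mul, one_mul, mul_add, Matrix.mul_one, Matrix.smul_mul,
      Matrix.mul_smul, hJV, smul_zero, smul_zero, add_zero]
    abel
  -- entry (0,1)
  have hev0 : ev (⟨0, by omega⟩ : Fin n) = 1 := by norm_num [hev]
  have hev1 : ev (⟨1, by omega⟩ : Fin n) = -1 := by norm_num [hev]
  have hentry : (NormedSpace.exp (Complex.I • ((t : ℝ) : ℂ) •
      (lap n).map (fun x => (x : ℂ)))) ⟨0, by omega⟩ ⟨1, by omega⟩
      = Complex.exp (c * n) * (a - b) := by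
    rw [hprod]
    simp only [Matrix.smul_apply, Matrix.add_apply, Matrix.smul_apply,
      Matrix.one_apply_ne h01, hJ, hV, Matrix.of_apply, Matrix.vecMulVec_apply,
      hev0, hev1, smul_eq_mul]
    ring
  -- now evaluate the exponentials using 4 ∣ n
  have hcn : Complex.exp (c * n) = Complex.exp (Complex.I * (h : ℂ) * (n : ℂ)) := by
    have : c * n = Complex.I * (h : ℂ) * (n : ℂ) + (m : ℤ) * (2 * Real.pi * Complex.I) := by
      rw [hc, ht]
      push_cast [hm4]
      ring
    rw [this, Complex.exp_add, Complex.exp_int_mul_two_pi_mul_I, mul_one]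
  have hcn2 : Complex.exp (c * ((n : ℂ) - 2))
      = - Complex.exp (Complex.I * (h : ℂ) * ((n : ℂ) - 2)) := by
    have : c * ((n : ℂ) - 2) = Complex.I * (h : ℂ) * ((n : ℂ) - 2)
        + (m : ℤ) * (2 * Real.pi * Complex.I) + (-(Real.pi * Complex.I)) := by
      rw [hc, ht]
      push_cast [hm4]
      ring
    rw [this, Complex.exp_add, Complex.exp_add, Complex.exp_int_mul_two_pi_mul_I, mul_one,
      Complex.exp_neg, Complex.exp_pi_mul_I]
    ring
  have hexpinv : Complex.exp (c * n) * Complex.exp (-(c * n)) = 1 := by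
    rw [← Complex.exp_add]; simp
  have hexp2c : Complex.exp (c * n) * Complex.exp (-(2 * c)) = Complex.exp (c * ((n:ℂ) - 2)) := by
    rw [← Complex.exp_add]; congr 1; ring
  have h1 : Complex.exp (c * (n : ℂ)) * a = (1 - Complex.exp (c * (n : ℂ))) * (n : ℂ)⁻¹ := by
    rw [ha]
    calc Complex.exp (c * (n:ℂ)) * ((Complex.exp (-(c * (n:ℂ))) - 1) * ((n:ℂ))⁻¹)
        = (Complex.exp (c * (n:ℂ)) * Complex.exp (-(c * (n:ℂ))) - Complex.exp (c * (n:ℂ)))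
            * ((n:ℂ))⁻¹ := by ring
      _ = (1 - Complex.exp (c * (n:ℂ))) * ((n:ℂ))⁻¹ := by rw [hexpinv]
  have h2 : Complex.exp (c * (n : ℂ)) * b
      = (Complex.exp (c * ((n:ℂ) - 2)) - Complex.exp (c * (n : ℂ))) * (2 : ℂ)⁻¹ := by
    rw [hb]
    calc Complex.exp (c * (n:ℂ)) * ((Complex.exp (-(2*c)) - 1) * (2:ℂ)⁻¹)
        = (Complex.exp (c * (n:ℂ)) * Complex.exp (-(2*c)) - Complex.exp (c * (n:ℂ)))
            * (2:ℂ)⁻¹ := by ring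
      _ = _ := by rw [hexp2c]
  have hz : Complex.exp (c * (n : ℂ)) * (a - b)
      = (n : ℂ)⁻¹ + (2 : ℂ)⁻¹ * Complex.exp (Complex.I * (h : ℂ) * ((n : ℂ) - 2))
          + (((n : ℂ) - 2) / (2 * (n : ℂ))) * Complex.exp (Complex.I * (h : ℂ) * (n : ℂ)) := by
    rw [mul_sub, h1, h2, hcn2, hcn]
    field_simp
    ring
  refine ⟨?_, ?_⟩
  · rw [hentry, hz]
  · -- trigonometric identity
    set θ : ℝ := ((n:ℝ) - 2) * h with hθ
    set φ : ℝ := (n:ℝ) * h with hφ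
    have e1 : Complex.I * (h:ℂ) * ((n:ℂ) - 2) = ((θ : ℝ) : ℂ) * Complex.I := by
      rw [hθ]; push_cast; ring
    have e2 : Complex.I * (h:ℂ) * (n:ℂ) = ((φ : ℝ) : ℂ) * Complex.I := by
      rw [hφ]; push_cast; ring
    set A : ℝ := (n:ℝ)⁻¹ + 2⁻¹ * Real.cos θ + (((n:ℝ) - 2)/(2*(n:ℝ))) * Real.cos φ with hA
    set B : ℝ := 2⁻¹ * Real.sin θ + (((n:ℝ) - 2)/(2*(n:ℝ))) * Real.sin φ with hB
    have hzz : (n : ℂ)⁻¹ + (2 : ℂ)⁻¹ * Complex.exp (Complex.I * (h : ℂ) * ((n : ℂ) - 2))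
        + (((n : ℂ) - 2) / (2 * (n : ℂ))) * Complex.exp (Complex.I * (h : ℂ) * (n : ℂ))
        = (A : ℂ) + (B : ℂ) * Complex.I := by
      rw [e1, e2, Complex.exp_mul_I, Complex.exp_mul_I, hA, hB]
      push_cast
      ring
    rw [hzz, Complex.sq_norm, Complex.normSq_add_mul_I]
    have h2h : Real.cos (2*h) = Real.cos φ * Real.cos θ + Real.sin φ * Real.sin θ := by
      have hd : 2*h = φ - θ := by rw [hφ, hθ]; ring
      rw [hd, Real.cos_sub]
    rw [h2h, hA, hB]
    have hsθ := Real.sin_sq_add_cos_sq θ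
    have hsφ := Real.sin_sq_add_cos_sq φ
    field_simp
    linear_combination ((n:ℝ)^2) * hsθ + (((n:ℝ)-2)^2) * hsφ
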